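/- Let r be a Hoehnke radical on S-acts such that the semisimple class S_r (acts A with r(A) = Δ_A) is closed under coproducts (disjoint unions). If B is a proper r-dense subact of a semisimple S-act A (A ∈ S_r, B ≤ A, B ≠ A, r(A/B) = ∇), then there exist x ∈ A \ B and s ∈ S such that sx ∈ B. -/
import Mathlib


universe u

variable {S : Type u} [Monoid S]

/-- An `S`-act homomorphism (equivariant map). -/
def IsActHom (S : Type u) [Monoid S] {A B : Type u} [MulAction S A] [MulAction S B]
    (f : A → B) : Prop :=
  ∀ (s : S) (a : A), f (s • a) = s • f a

/-- A subact: a nonempty subset closed under the action. -/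
def IsSubact (S : Type u) [Monoid S] {A : Type u} [MulAction S A] (B : Set A) : Prop :=
  B.Nonempty ∧ ∀ (s : S), ∀ a ∈ B, s • a ∈ B

/-- A congruence on an `S`-act: an equivalence relation compatible with the action. -/
structure ActCong (S : Type u) [Monoid S] (A : Type u) [MulAction S A] where
  r : A → A → Prop
  iseqv : Equivalence r
  compat : ∀ (s : S) (a b : A), r a b → r (s • a) (s • b)

def ActCong.toSetoid {A : Type u} [MulAction S A] (χ : ActCong S A) : Setoid A :=
  ⟨χ.r, χ.iseqv⟩

instance actQuotSMul {A : Type u} [MulAction S A] (χ : ActCong S A) :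
    SMul S (Quotient χ.toSetoid) :=
  ⟨fun s => Quotient.map (fun a => s • a) (fun a b h => χ.compat s a b h)⟩

instance actQuotMulAction {A : Type u} [MulAction S A] (χ : ActCong S A) :
    MulAction S (Quotient χ.toSetoid) where
  one_smul := by
    intro x
    induction x using Quotient.inductionOn with
    | h a => exact congrArg (Quotient.mk χ.toSetoid) (one_smul S a)
  mul_smul := by
    intro s t x
    induction x using Quotient.inductionOn with
    | h a => exact congrArg (Quotient.mk χ.toSetoid) (mul_smul s t a)

/-- The Rees congruence determined by an action-closed subset `B`. -/
def reesCong {A : Type u} [MulAction S A] (B : Set A)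
    (hB : ∀ (s : S), ∀ a ∈ B, s • a ∈ B) : ActCong S A where
  r a b := a = b ∨ (a ∈ B ∧ b ∈ B)
  iseqv := by
    constructor
    · exact fun a => Or.inl rfl
    · rintro a b (rfl | ⟨h1, h2⟩)
      exacts [Or.inl rfl, Or.inr ⟨h2, h1⟩]
    · rintro a b c (rfl | ⟨h1, h2⟩) h
      · exact h
      · rcases h with rfl | ⟨h3, h4⟩
        exacts [Or.inr ⟨h1, h2⟩, Or.inr ⟨h1, h4⟩]
  compat := by
    rintro s a b (rfl | ⟨h1, h2⟩)
    exacts [Or.inl rfl, Or.inr ⟨hB s a h1, hB s b h2⟩]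

/-- A Hoehnke radical on `S`-acts. -/
structure HoehnkeRadical (S : Type u) [Monoid S] : Type (u + 1) where
  rad : ∀ (A : Type u) [MulAction S A], ActCong S A
  functorial : ∀ {A B : Type u} [MulAction S A] [MulAction S B] (f : A → B),
    IsActHom S f → ∀ a a' : A, (rad A).r a a' → (rad B).r (f a) (f a')
  radQuot : ∀ (A : Type u) [MulAction S A],
    ∀ x y : Quotient (rad A).toSetoid, (rad (Quotient (rad A).toSetoid)).r x y → x = y

/-- The closure `c^r_A(B)`: preimage of the `r(A/B)`-class of the collapsed point `B`. -/
def rClosure (r : HoehnkeRadical S) {A : Type u} [MulAction S A] (B : Set A)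
    (hB : ∀ (s : S), ∀ a ∈ B, s • a ∈ B) : Set A :=
  {a : A | ∃ b ∈ B, (r.rad (Quotient (reesCong B hB).toSetoid)).r
      (Quotient.mk (reesCong B hB).toSetoid a) (Quotient.mk (reesCong B hB).toSetoid b)}

/-- `B` is `r`-dense in `A`: the Rees quotient `A/B` is a radical act, `r(A/B) = ∇`. -/
def IsRDense (r : HoehnkeRadical S) {A : Type u} [MulAction S A] (B : Set A)
    (hB : ∀ (s : S), ∀ a ∈ B, s • a ∈ B) : Prop :=
  ∀ x y : Quotient (reesCong B hB).toSetoid, (r.rad (Quotient (reesCong B hB).toSetoid)).r x y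

theorem image_closed {A C : Type u} [MulAction S A] [MulAction S C] {f : A → C}
    (hf : IsActHom S f) {B : Set A} (hB : ∀ (s : S), ∀ a ∈ B, s • a ∈ B) :
    ∀ (s : S), ∀ c ∈ f '' B, s • c ∈ f '' B := by
  rintro s c ⟨a, ha, rfl⟩
  exact ⟨s • a, hB s a ha, hf s a⟩

theorem range_closed {A C : Type u} [MulAction S A] [MulAction S C] {f : A → C}
    (hf : IsActHom S f) :
    ∀ (s : S), ∀ c ∈ Set.range f, s • c ∈ Set.range f := by
  rintro s c ⟨a, rfl⟩
  exact ⟨s • a, hf s a⟩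

theorem rClosure_closed (r : HoehnkeRadical S) {A : Type u} [MulAction S A]
    (B : Set A) (hB : ∀ (s : S), ∀ a ∈ B, s • a ∈ B) :
    ∀ (s : S), ∀ a ∈ rClosure r B hB, s • a ∈ rClosure r B hB := by
  rintro s a ⟨b, hb, hab⟩
  exact ⟨s • b, hB s b hb, (r.rad _).compat s _ _ hab⟩

/-- The join of two congruences. -/
def congJoin {A : Type u} [MulAction S A] (τ₁ τ₂ : ActCong S A) : ActCong S A where
  r a b := ∀ θ : ActCong S A, (∀ x y, τ₁.r x y → θ.r x y) → (∀ x y, τ₂.r x y → θ.r x y) → θ.r a b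
  iseqv := by
    constructor
    · exact fun a θ _ _ => θ.iseqv.refl a
    · exact fun h θ h1 h2 => θ.iseqv.symm (h θ h1 h2)
    · exact fun h h' θ h1 h2 => θ.iseqv.trans (h θ h1 h2) (h' θ h1 h2)
  compat := fun s a b h θ h1 h2 => θ.compat s a b (h θ h1 h2)

/-- For `κ ≤ τ` the induced congruence `τ/κ` on the quotient `A/κ`. -/
def quotCong {A : Type u} [MulAction S A] (κ τ : ActCong S A)
    (h : ∀ a b, κ.r a b → τ.r a b) : ActCong S (Quotient κ.toSetoid) where
  r x y := ∃ a b : A, x = Quotient.mk κ.toSetoid a ∧ y = Quotient.mk κ.toSetoid b ∧ τ.r a b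
  iseqv := by
    constructor
    · intro x
      obtain ⟨a, rfl⟩ := Quotient.exists_rep x
      exact ⟨a, a, rfl, rfl, τ.iseqv.refl a⟩
    · rintro x y ⟨a, b, rfl, rfl, hab⟩
      exact ⟨b, a, rfl, rfl, τ.iseqv.symm hab⟩
    · rintro x y z ⟨a, b, rfl, hy, hab⟩ ⟨b', c, hy', rfl, hbc⟩
      refine ⟨a, c, rfl, rfl, τ.iseqv.trans hab (τ.iseqv.trans ?_ hbc)⟩
      exact h _ _ (Quotient.exact (hy.symm.trans hy'))
  compat := by
    rintro s x y ⟨a, b, rfl, rfl, hab⟩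
    exact ⟨s • a, s • b, rfl, rfl, τ.compat s a b hab⟩

/-- The smallest extension of an on-`B` congruence `χ` to the whole act. -/
def extCong {A : Type u} [MulAction S A] (χ : A → A → Prop)
    (hsymm : ∀ a b, χ a b → χ b a) (htrans : ∀ a b c, χ a b → χ b c → χ a c)
    (hcompat : ∀ (s : S) (a b : A), χ a b → χ (s • a) (s • b)) : ActCong S A where
  r a b := a = b ∨ χ a b
  iseqv := by
    constructor
    · exact fun a => Or.inl rfl
    · rintro a b (rfl | h)
      exacts [Or.inl rfl, Or.inr (hsymm _ _ h)]
    · rintro a b c (rfl | h) h'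
      · exact h'
      · rcases h' with rfl | h'
        exacts [Or.inr h, Or.inr (htrans _ _ _ h h')]
  compat := by
    rintro s a b (rfl | h)
    exacts [Or.inl rfl, Or.inr (hcompat s a b h)]


/-- Two-element indexed family for a binary coproduct, indexed by `ULift Bool`. -/
def copF (P Q : Type u) (i : ULift.{u} Bool) : Type u :=
  Bool.rec P Q i.down

instance copFAct (P Q : Type u) [instP : MulAction S P] [instQ : MulAction S Q]
    (i : ULift.{u} Bool) : MulAction S (copF P Q i) :=
  match i with
  | ⟨false⟩ => instP
  | ⟨true⟩ => instQ

theorem rdense_proper_subact_of_semisimple {S : Type u} [Monoid S] (r : HoehnkeRadical S)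
    (hcop : ∀ (ι : Type u) (F : ι → Type u) [∀ i, MulAction S (F i)],
      (∀ i, ∀ x y : F i, (r.rad (F i)).r x y → x = y) →
      ∀ x y : (Σ i, F i), (r.rad (Σ i, F i)).r x y → x = y)
    {A : Type u} [MulAction S A] (hA : ∀ x y : A, (r.rad A).r x y → x = y)
    (B : Set A) (hB : IsSubact S B) (hproper : B ≠ Set.univ)
    (hdense : IsRDense r B hB.2) :
    ∃ x, x ∉ B ∧ ∃ s : S, s • x ∈ B := by
  classical
  by_contra hcon
  push_neg at hcon
  -- hcon : ∀ x, x ∉ B → ∀ s, s • x ∉ B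
  obtain ⟨a0, ha0⟩ : ∃ a : A, a ∉ B := by
    by_contra h
    push_neg at h
    exact hproper (Set.eq_univ_of_forall h)
  obtain ⟨b0, hb0⟩ := hB.1
  -- the complement of B as a subact
  let C := {a : A // a ∉ B}
  letI instC : MulAction S C :=
    { smul := fun s x => ⟨s • x.1, hcon x.1 x.2 s⟩
      one_smul := fun x => Subtype.ext (one_smul S x.1)
      mul_smul := fun s t x => Subtype.ext (mul_smul s t x.1) }
  -- C is semisimple, being a subact of the semisimple act A
  have hCss : ∀ x y : C, (r.rad C).r x y → x = y := by
    intro x y hxy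
    have : IsActHom S (fun x : C => x.1) := fun s x => rfl
    exact Subtype.ext (hA _ _ (r.functorial _ this x y hxy))
  have hPss : ∀ x y : PUnit.{u + 1}, (r.rad PUnit.{u + 1}).r x y → x = y := by
    intro x y _; exact Subsingleton.elim x y
  -- the coproduct of PUnit and C
  let F : ULift.{u} Bool → Type u := copF PUnit.{u + 1} C
  have hFss : ∀ i, ∀ x y : F i, (r.rad (F i)).r x y → x = y := by
    rintro ⟨i⟩
    cases i
    · exact hPss
    · exact hCss
  have hSig := hcop (ULift.{u} Bool) F hFss
  -- the embedding of A/B into the coproduct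
  let f : A → Σ i, F i := fun a =>
    if h : a ∈ B then (⟨⟨false⟩, PUnit.unit⟩ : Σ i, F i) else (⟨⟨true⟩, (⟨a, h⟩ : C)⟩ : Σ i, F i)
  have hfB : ∀ a (h : a ∈ B), f a = (⟨⟨false⟩, PUnit.unit⟩ : Σ i, F i) := by
    intro a h; simp only [f, dif_pos h]
  have hfC : ∀ a (h : a ∉ B), f a = (⟨⟨true⟩, (⟨a, h⟩ : C)⟩ : Σ i, F i) := by
    intro a h; simp only [f, dif_neg h]
  have hwd : ∀ a b : A, (reesCong B hB.2).r a b → f a = f b := by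
    rintro a b (rfl | ⟨h1, h2⟩)
    · rfl
    · rw [hfB a h1, hfB b h2]
  let g : Quotient (reesCong B hB.2).toSetoid → Σ i, F i :=
    Quotient.lift f hwd
  have hg : IsActHom S g := by
    intro s x
    induction x using Quotient.inductionOn with
    | h a =>
      show f (s • a) = s • f a
      by_cases h : a ∈ B
      · rw [hfB a h, hfB (s • a) (hB.2 s a h)]
        rfl
      · rw [hfC a h, hfC (s • a) (hcon a h s)]
        rfl
  have key := hSig _ _ (r.functorial g hg _ _
    (hdense (Quotient.mk _ a0) (Quotient.mk _ b0)))
  have : f a0 = f b0 := key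
  rw [hfC a0 ha0, hfB b0 hb0] at this
  exact Bool.noConfusion (congrArg (fun x => x.1.down) this)
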